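/- Every element n of the group N₁ factors uniquely as n = u₁(y)·c with y ∈ F and c ∈ C; that is, N₁ is the semidirect product of Y := {u₁(y) : y ∈ F} and C, with Y ∩ C = {I₄}. -/

import Mathlib

open Matrix

/-- `n(u, x₁, x₂) = [[1,u,x₁,x₂],[0,1,0,−ι(x₁)],[0,0,1,−ι(u)],[0,0,0,1]]`. -/
def nmat {E : Type*} [Field E] (ι : E →+* E) (u x₁ x₂ : E) :
    Matrix (Fin 4) (Fin 4) E :=
  !![1, u, x₁, x₂; 0, 1, 0, -ι x₁; 0, 0, 1, -ι u; 0, 0, 0, 1]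

/-- The group `N₁`. -/
def N1 {E : Type*} [Field E] (ι : E →+* E) : Set (Matrix (Fin 4) (Fin 4) E) :=
  {m | ∃ u x₁ x₂ : E, x₂ + ι x₂ + u * ι x₁ + x₁ * ι u = 0 ∧ m = nmat ι u x₁ x₂}

/-- `C = {n(u, x₁, x₂) ∈ N₁ : u ∈ F}`. -/
def Cset {E : Type*} [Field E] (ι : E →+* E) : Set (Matrix (Fin 4) (Fin 4) E) :=
  {m | ∃ u x₁ x₂ : E, ι u = u ∧ x₂ + ι x₂ + u * ι x₁ + x₁ * ι u = 0 ∧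
    m = nmat ι u x₁ x₂}

/-- `u₁(y) = I₄ + s·y·(E₁₂ + E₃₄)`. -/
def u1mat {E : Type*} [Field E] (s y : E) : Matrix (Fin 4) (Fin 4) E :=
  1 + (s * y) • (Matrix.single 0 1 1 + Matrix.single 2 3 1)

lemma nmat_inj {E : Type*} [Field E] (ι : E →+* E) {u x₁ x₂ u' x₁' x₂' : E}
    (h : nmat ι u x₁ x₂ = nmat ι u' x₁' x₂') : u = u' ∧ x₁ = x₁' ∧ x₂ = x₂' := by
  have h1 := congrFun (congrFun h 0) 1
  have h2 := congrFun (congrFun h 0) 2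
  have h3 := congrFun (congrFun h 0) 3
  simp [nmat] at h1 h2 h3
  exact ⟨h1, h2, h3⟩

lemma u1mat_eq {E : Type*} [Field E] (ι : E →+* E)
    (s : E) (hss : ι s = -s) (y : E) (hy : ι y = y) :
    u1mat s y = nmat ι (s * y) 0 0 := by
  ext i j
  fin_cases i <;> fin_cases j <;>
    simp [u1mat, nmat, Matrix.one_apply, Matrix.add_apply, Matrix.smul_apply,
      Matrix.vecHead, Matrix.vecTail, Function.comp, _root_.map_mul, hss, hy]

lemma mul_nmat {E : Type*} [Field E] (ι : E →+* E) (v a x₁ x₂ : E) :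
    nmat ι v 0 0 * nmat ι a x₁ x₂ = nmat ι (v + a) x₁ (x₂ - v * ι x₁) := by
  ext i j
  fin_cases i <;> fin_cases j <;>
    simp [nmat, Matrix.mul_apply, Fin.sum_univ_four, Matrix.vecHead, Matrix.vecTail,
      Function.comp, map_add] <;> ring

/-- Every element of `N₁` factors uniquely as `u₁(y)·c` with `y ∈ F` and `c ∈ C`;
moreover `Y ∩ C = {I₄}`, so `N₁` is the semidirect product of `Y` and `C`. -/
theorem statement15 {E : Type*} [Field E] (htwo : (2 : E) ≠ 0)
    (ι : E →+* E) (hinv : ∀ x, ι (ι x) = x) (hni : ι ≠ RingHom.id E)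
    (s : E) (hs0 : s ≠ 0) (hss : ι s = -s) :
    (∀ m ∈ N1 ι, ∃ y : E, ∃ c : Matrix (Fin 4) (Fin 4) E,
      ι y = y ∧ c ∈ Cset ι ∧ m = u1mat s y * c ∧
      (∀ y' : E, ∀ c' : Matrix (Fin 4) (Fin 4) E,
        ι y' = y' → c' ∈ Cset ι → m = u1mat s y' * c' → y' = y ∧ c' = c)) ∧
    (∀ y : E, ι y = y → u1mat s y ∈ Cset ι → u1mat s y = 1) := by
  have h2s : (2 : E) * s ≠ 0 := mul_ne_zero htwo hs0
  constructor
  · rintro m ⟨u, x₁, x₂, hrel, rfl⟩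
    obtain ⟨y, hy_def⟩ : ∃ y : E, y = (u - ι u) / (2 * s) := ⟨_, rfl⟩
    have hy : ι y = y := by
      rw [hy_def, map_div₀, map_sub, hinv, _root_.map_mul, map_ofNat, hss]
      rw [div_eq_div_iff (by rw [mul_neg]; exact neg_ne_zero.mpr h2s) h2s]
      ring
    have hsy : s * y = (u - ι u) / 2 := by
      rw [hy_def]; field_simp
    obtain ⟨a, ha_def⟩ : ∃ a : E, a = (u + ι u) / 2 := ⟨_, rfl⟩
    have ha : ι a = a := by
      rw [ha_def, map_div₀, map_add, hinv, map_ofNat]; ring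
    have hua : s * y + a = u := by rw [hsy, ha_def]; field_simp; ring
    have hιsy : ι (s * y) = -(s * y) := by rw [_root_.map_mul, hss, hy]; ring
    have hιu : ι u = a - s * y := by
      rw [← hua, map_add, hιsy, ha]; ring
    refine ⟨y, nmat ι a x₁ (x₂ + s * y * ι x₁), hy, ?_, ?_, ?_⟩
    · refine ⟨a, x₁, x₂ + s * y * ι x₁, ha, ?_, rfl⟩
      rw [map_add, _root_.map_mul, hιsy, hinv, ha]
      rw [hιu, ← hua] at hrel
      linear_combination hrel
    · rw [u1mat_eq ι s hss y hy, mul_nmat, hua]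
      congr 1
      ring
    · rintro y' c' hy' ⟨a', x₁', x₂'', ha', hrel', rfl⟩ heq
      rw [u1mat_eq ι s hss y' hy', mul_nmat] at heq
      obtain ⟨e1, e2, e3⟩ := nmat_inj ι heq
      have hιsy' : ι (s * y') = -(s * y') := by rw [_root_.map_mul, hss, hy']; ring
      have hιu' : ι u = a' - s * y' := by
        rw [e1, map_add, hιsy', ha']; ring
      have h4 : u - ι u = 2 * s * y' := by rw [hιu', e1]; ring
      have hyy : y' = y := by
        rw [hy_def, h4]
        field_simp
      refine ⟨hyy, ?_⟩
      have haa : a' = a := by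
        have h : s * y + a' = s * y + a := by
          rw [hua, e1, hyy]
        exact add_left_cancel h
      rw [hyy, ← e2] at e3
      have hx2 : x₂'' = x₂ + s * y * ι x₁ := by linear_combination -e3
      rw [haa, ← e2, hx2]
  · rintro y hy ⟨u', x₁', x₂', hu', _, heq⟩
    rw [u1mat_eq ι s hss y hy] at heq
    obtain ⟨e1, e2, e3⟩ := nmat_inj ι heq
    have hιsy : ι (s * y) = -(s * y) := by rw [_root_.map_mul, hss, hy]; ring
    have h0 : s * y = -(s * y) := by
      conv_lhs => rw [e1, ← hu', ← e1, hιsy]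
    have h2 : (2 : E) * (s * y) = 0 := by linear_combination h0
    have hsy0 : s * y = 0 := (mul_eq_zero.mp h2).resolve_left htwo
    rw [u1mat, hsy0, zero_smul, add_zero]
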